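/- Let α_p(π,ε) be the principal's worst-case expected utility when the agent's response is ε-approximately optimal under prior π. Then for any two priors π, π' on a finite set Y, α_p(π,ε) ≥ α_p(π',ε) − 2·d₁(π,π')/ε − d₁(π,π'), where d₁ is the total-variation (ℓ¹) distance between distributions. -/

import Mathlib

open Finset

/-- robustness of the principal's worst-case utility `α_p` to
misspecification of the prior, in terms of the ℓ¹ distance `d₁(π,π')`. -/
theorem alpha_prior_misspecification
    {Y R : Type*} [Fintype Y] [Fintype R] [Nonempty R]
    (U V : R → Y → ℝ)
    (hU : ∀ r y, U r y ∈ Set.Icc (0:ℝ) 1)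
    (hV : ∀ r y, V r y ∈ Set.Icc (0:ℝ) 1)
    (α : (Y → ℝ) → ℝ → ℝ)
    (hα : ∀ (ρ : Y → ℝ) (e : ℝ), α ρ e = sInf {v : ℝ | ∃ μ : R → ℝ,
        (∀ r, 0 ≤ μ r) ∧ (∑ r, μ r = 1) ∧
        (∀ r' : R, (∑ y, ρ y * U r' y) - (∑ y, ρ y * ∑ r, μ r * U r y) ≤ e) ∧
        v = ∑ y, ρ y * ∑ r, μ r * V r y})
    (π π' : Y → ℝ)
    (hπ0 : ∀ y, 0 ≤ π y) (hπ1 : ∑ y, π y = 1)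
    (hπ'0 : ∀ y, 0 ≤ π' y) (hπ'1 : ∑ y, π' y = 1)
    (ε : ℝ) (hε : 0 < ε) :
    α π ε ≥ α π' ε - 2 * (∑ y, |π y - π' y|) / ε - ∑ y, |π y - π' y| := by
  classical
  set d : ℝ := ∑ y, |π y - π' y| with hd
  have hd0 : 0 ≤ d := Finset.sum_nonneg fun y _ => abs_nonneg _
  -- shift lemma
  have shift : ∀ f : Y → ℝ, (∀ y, 0 ≤ f y ∧ f y ≤ 1) →
      |(∑ y, π y * f y) - ∑ y, π' y * f y| ≤ d := by
    intro f hf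
    rw [← Finset.sum_sub_distrib]
    refine (Finset.abs_sum_le_sum_abs _ _).trans (Finset.sum_le_sum ?_)
    intro y _
    rw [← sub_mul, abs_mul]
    calc |π y - π' y| * |f y| ≤ |π y - π' y| * 1 := by
          refine mul_le_mul_of_nonneg_left ?_ (abs_nonneg _)
          rw [abs_of_nonneg (hf y).1]; exact (hf y).2
      _ = |π y - π' y| := mul_one _
  -- averaged payoff bounds
  have avg01 : ∀ (W : R → Y → ℝ), (∀ r y, W r y ∈ Set.Icc (0:ℝ) 1) →
      ∀ (μ : R → ℝ), (∀ r, 0 ≤ μ r) → (∑ r, μ r = 1) →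
      ∀ y, 0 ≤ (∑ r, μ r * W r y) ∧ (∑ r, μ r * W r y) ≤ 1 := by
    intro W hW μ hμ0 hμ1 y
    constructor
    · exact Finset.sum_nonneg fun r _ => mul_nonneg (hμ0 r) (hW r y).1
    · calc (∑ r, μ r * W r y) ≤ ∑ r, μ r * 1 :=
            Finset.sum_le_sum fun r _ => mul_le_mul_of_nonneg_left (hW r y).2 (hμ0 r)
        _ = 1 := by simp [hμ1]
  -- bounded below by 0
  have bdd : ∀ (ρ : Y → ℝ), (∀ y, 0 ≤ ρ y) →
      BddBelow {v : ℝ | ∃ μ : R → ℝ,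
        (∀ r, 0 ≤ μ r) ∧ (∑ r, μ r = 1) ∧
        (∀ r' : R, (∑ y, ρ y * U r' y) - (∑ y, ρ y * ∑ r, μ r * U r y) ≤ ε) ∧
        v = ∑ y, ρ y * ∑ r, μ r * V r y} := by
    intro ρ hρ
    refine ⟨0, fun v hv => ?_⟩
    obtain ⟨μ, hμ0, hμ1, _, rfl⟩ := hv
    exact Finset.sum_nonneg fun y _ => mul_nonneg (hρ y)
      (Finset.sum_nonneg fun r _ => mul_nonneg (hμ0 r) (hV r y).1)
  -- nonemptiness of the feasible set for π
  obtain ⟨r0, _, hr0⟩ := Finset.exists_max_image (Finset.univ : Finset R)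
    (fun r => ∑ y, π y * U r y) Finset.univ_nonempty
  have hne : ∃ v, v ∈ {v : ℝ | ∃ μ : R → ℝ,
        (∀ r, 0 ≤ μ r) ∧ (∑ r, μ r = 1) ∧
        (∀ r' : R, (∑ y, π y * U r' y) - (∑ y, π y * ∑ r, μ r * U r y) ≤ ε) ∧
        v = ∑ y, π y * ∑ r, μ r * V r y} := by
    refine ⟨_, ⟨fun r => if r = r0 then 1 else 0, fun r => by positivity, by simp, ?_, rfl⟩⟩
    intro r'
    have : ∀ y, (∑ r, (if r = r0 then (1:ℝ) else 0) * U r y) = U r0 y := by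
      intro y; simp [ite_mul]
    simp only [this]
    have := hr0 r' (Finset.mem_univ r')
    linarith
  rw [hα π ε]
  refine le_csInf hne ?_
  -- main bound: every feasible value for π is ≥ α π' ε - (2d/ε + d)
  intro v hv
  obtain ⟨μ, hμ0, hμ1, hreg, rfl⟩ := hv
  -- best response to π'
  obtain ⟨rs, _, hrs⟩ := Finset.exists_max_image (Finset.univ : Finset R)
    (fun r => ∑ y, π' y * U r y) Finset.univ_nonempty
  set l : ℝ := 2 * d / (ε + 2 * d) with hl
  have hden : 0 < ε + 2 * d := by linarith
  have hl0 : 0 ≤ l := by positivity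
  have hl1 : l ≤ 1 := by rw [hl, div_le_one hden]; linarith
  set μt : R → ℝ := fun r => (1 - l) * μ r + l * (if r = rs then 1 else 0) with hμt
  have expand : ∀ (W : R → Y → ℝ),
      (∑ y, π' y * ∑ r, μt r * W r y)
        = (1 - l) * (∑ y, π' y * ∑ r, μ r * W r y) + l * ∑ y, π' y * W rs y := by
    intro W
    have h1 : ∀ y, (∑ r, μt r * W r y)
        = (1 - l) * (∑ r, μ r * W r y) + l * W rs y := by
      intro y
      simp only [hμt, add_mul, Finset.sum_add_distrib, mul_assoc, ← Finset.mul_sum,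
        ite_mul, one_mul, zero_mul, Finset.sum_ite_eq']
      simp
    calc (∑ y, π' y * ∑ r, μt r * W r y)
        = ∑ y, ((1 - l) * (π' y * ∑ r, μ r * W r y) + l * (π' y * W rs y)) :=
          Finset.sum_congr rfl fun y _ => by rw [h1]; ring
      _ = _ := by rw [Finset.sum_add_distrib, ← Finset.mul_sum, ← Finset.mul_sum]
  -- μt is feasible for (π', ε)
  have hμt0 : ∀ r, 0 ≤ μt r := by
    intro r
    have : (0:ℝ) ≤ (if r = rs then (1:ℝ) else 0) := by positivity
    have h1 : 0 ≤ 1 - l := by linarith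
    exact add_nonneg (mul_nonneg h1 (hμ0 r)) (mul_nonneg hl0 this)
  have hμt1 : ∑ r, μt r = 1 := by
    simp only [hμt, Finset.sum_add_distrib, ← Finset.mul_sum, hμ1, Finset.sum_ite_eq',
      Finset.mem_univ, if_pos]
    ring
  have hregt : ∀ r' : R,
      (∑ y, π' y * U r' y) - (∑ y, π' y * ∑ r, μt r * U r y) ≤ ε := by
    intro r'
    rw [expand U]
    have hAB : (∑ y, π' y * U r' y) - (∑ y, π' y * ∑ r, μ r * U r y) ≤ ε + 2 * d := by
      have h1 := abs_le.mp (shift (fun y => U r' y) (fun y => ⟨(hU r' y).1, (hU r' y).2⟩))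
      have h2 := abs_le.mp (shift (fun y => ∑ r, μ r * U r y)
        (fun y => avg01 U hU μ hμ0 hμ1 y))
      have h3 := hreg r'
      linarith [h1.2, h2.1]
    have hstar : (∑ y, π' y * U r' y) ≤ ∑ y, π' y * U rs y :=
      hrs r' (Finset.mem_univ r')
    have hle : l * ((∑ y, π' y * U r' y) - ∑ y, π' y * U rs y) ≤ 0 :=
      mul_nonpos_of_nonneg_of_nonpos hl0 (by linarith)
    have hval : (1 - l) * (ε + 2 * d) = ε := by
      rw [hl, sub_mul, div_mul_cancel₀ _ hden.ne']; ring
    nlinarith [mul_le_mul_of_nonneg_left hAB (by linarith : (0:ℝ) ≤ 1 - l)]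
  -- α π' ε ≤ value of μt under π'
  have hα' : α π' ε ≤ ∑ y, π' y * ∑ r, μt r * V r y := by
    rw [hα π' ε]
    exact csInf_le (bdd π' hπ'0) ⟨μt, hμt0, hμt1, hregt, rfl⟩
  -- value bounds
  have hWμ : ∑ y, π' y * ∑ r, μ r * V r y ≤ (∑ y, π y * ∑ r, μ r * V r y) + d := by
    have := abs_le.mp (shift (fun y => ∑ r, μ r * V r y) (fun y => avg01 V hV μ hμ0 hμ1 y))
    linarith [this.1]
  have hWs : ∑ y, π' y * V rs y ≤ 1 := by
    calc ∑ y, π' y * V rs y ≤ ∑ y, π' y * 1 :=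
          Finset.sum_le_sum fun y _ => mul_le_mul_of_nonneg_left (hV rs y).2 (hπ'0 y)
      _ = 1 := by simp [hπ'1]
  have hWμ0 : 0 ≤ ∑ y, π' y * ∑ r, μ r * V r y :=
    Finset.sum_nonneg fun y _ => mul_nonneg (hπ'0 y) (avg01 V hV μ hμ0 hμ1 y).1
  have hexp := expand V
  have hlle : l ≤ 2 * d / ε := by
    rw [hl, div_le_div_iff₀ hden hε]
    nlinarith
  -- combine
  have : α π' ε ≤ (∑ y, π y * ∑ r, μ r * V r y) + d + 2 * d / ε := by
    have h1 : (1 - l) * (∑ y, π' y * ∑ r, μ r * V r y) + l * ∑ y, π' y * V rs y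
        ≤ (∑ y, π' y * ∑ r, μ r * V r y) + l := by
      nlinarith
    calc α π' ε ≤ ∑ y, π' y * ∑ r, μt r * V r y := hα'
      _ = (1 - l) * (∑ y, π' y * ∑ r, μ r * V r y) + l * ∑ y, π' y * V rs y := hexp
      _ ≤ (∑ y, π' y * ∑ r, μ r * V r y) + l := h1
      _ ≤ (∑ y, π y * ∑ r, μ r * V r y) + d + 2 * d / ε := by linarith
  linarith
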